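/- Let G be a finite abelian group of exponent n, B ⊆ G\{0} with B ∩ (−B) = ∅, and K a subfield of Q(ζ_{4n}). Set H = η(Gal(Q(ζ_{4n})/K)), H_1 = {h ∈ H : h ≡ 1 (mod 4)}, H_2 = {h ∈ H : h ≡ 3 (mod 4)}. Then μ_g = i(χ_g(B) − χ_g(−B)) lies in K for all g ∈ G if and only if hB = B for all h ∈ H_1 and hB = −B for all h ∈ H_2. -/

import Mathlib

open Finset Pointwise Polynomial

section FourierAux

variable {G : Type*} [AddCommGroup G] [Fintype G] [DecidableEq G]
variable {F : Type*} [Field F] [CharZero F]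

lemma aux_nondeg (χ : G → AddChar G F)
    (hinj : Function.Injective χ) {z : G} (hz : z ≠ 0) :
    ∃ g : G, χ g z ≠ 1 := by
  by_contra hcon
  push_neg at hcon
  have hinj2 : Function.Injective (fun g : G => ((χ g).toMonoidHom : Multiplicative G →* F)) := by
    intro a b hab
    apply hinj
    ext x
    exact DFunLike.congr_fun hab (Multiplicative.ofAdd x)
  have li : LinearIndependent F (fun g : G => ((χ g).toMonoidHom : Multiplicative G → F)) :=
    (linearIndependent_monoidHom (Multiplicative G) F).comp _ hinj2
  have hspan : Submodule.span F
      (Set.range fun g : G => ((χ g).toMonoidHom : Multiplicative G → F)) = ⊤ := by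
    apply li.span_eq_top_of_card_eq_finrank
    simp [Module.finrank_pi]
  have hkey : ∀ f ∈ Submodule.span F
      (Set.range fun g : G => ((χ g).toMonoidHom : Multiplicative G → F)),
      f (Multiplicative.ofAdd z) = f (Multiplicative.ofAdd 0) := by
    intro f hf
    induction hf using Submodule.span_induction with
    | mem f hf =>
      obtain ⟨g, rfl⟩ := hf
      show χ g z = χ g 0
      rw [hcon g, AddChar.map_zero_eq_one]
    | zero => rfl
    | add f g _ _ hf hg => simp only [Pi.add_apply, hf, hg]
    | smul c f _ hf => simp only [Pi.smul_apply, hf]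
  have := hkey (Pi.single (Multiplicative.ofAdd z) (1 : F)) (hspan ▸ Submodule.mem_top)
  rw [Pi.single_eq_same, Pi.single_eq_of_ne (fun h => hz (by simpa using h.symm))] at this
  exact one_ne_zero this

lemma aux_orth (χ : G → AddChar G F)
    (hmul : ∀ g h x : G, χ (g + h) x = χ g x * χ h x)
    (hinj : Function.Injective χ) (z : G) :
    ∑ g : G, χ g z = if z = 0 then (Fintype.card G : F) else 0 := by
  rcases eq_or_ne z 0 with rfl | hz
  · simp
  · rw [if_neg hz]
    have h0 : χ 0 z = 1 := by
      have h1 : χ 0 z * χ 0 (-z) = 1 := by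
        rw [← AddChar.map_add_eq_mul, add_neg_cancel, AddChar.map_zero_eq_one]
      have h2 : χ 0 z = χ 0 z * χ 0 z := by
        rw [← hmul, add_zero]
      have hne : χ 0 z ≠ 0 := fun h => by simp [h] at h1
      exact (mul_left_cancel₀ hne (by rw [mul_one]; exact h2)).symm
    let ψ : AddChar G F :=
      { toFun := fun g => χ g z
        map_zero_eq_one' := h0
        map_add_eq_mul' := fun a b => hmul a b z }
    have hψ : ψ ≠ 0 := by
      obtain ⟨g, hg⟩ := aux_nondeg χ hinj hz
      intro h
      apply hg
      have := DFunLike.congr_fun h g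
      simpa [ψ] using this
    exact AddChar.sum_eq_zero_iff_ne_zero.2 hψ

lemma aux_fourier (χ : G → AddChar G F)
    (hmul : ∀ g h x : G, χ (g + h) x = χ g x * χ h x)
    (hinj : Function.Injective χ)
    (c : G → ℤ) (hc : ∀ g : G, ∑ x : G, (c x : F) * χ g x = 0) :
    ∀ x, c x = 0 := by
  intro y
  have key : ∑ g : G, (∑ x : G, (c x : F) * χ g x) * χ g (-y) = 0 := by
    simp [hc]
  have key2 : ∑ x : G, (c x : F) * (∑ g : G, χ g (x - y)) = 0 := by
    calc ∑ x : G, (c x : F) * ∑ g : G, χ g (x - y)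
        = ∑ x : G, ∑ g : G, (c x : F) * χ g (x - y) := by simp [Finset.mul_sum]
      _ = ∑ g : G, ∑ x : G, (c x : F) * χ g (x - y) := Finset.sum_comm
      _ = ∑ g : G, ∑ x : G, (c x : F) * χ g x * χ g (-y) := by
          apply Finset.sum_congr rfl; intro g _
          apply Finset.sum_congr rfl; intro x _
          rw [mul_assoc, ← AddChar.map_add_eq_mul, ← sub_eq_add_neg]
      _ = ∑ g : G, (∑ x : G, (c x : F) * χ g x) * χ g (-y) := by
          simp [Finset.sum_mul]
      _ = 0 := key
  simp only [aux_orth χ hmul hinj, sub_eq_zero, mul_ite, mul_zero] at key2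
  rw [Finset.sum_ite_eq' Finset.univ y (fun x => (c x : F) * (Fintype.card G : F))] at key2
  simp only [Finset.mem_univ, if_true] at key2
  have hcard : ((Fintype.card G : F)) ≠ 0 := Nat.cast_ne_zero.2 Fintype.card_ne_zero
  have : (c y : F) = 0 := by
    rcases mul_eq_zero.1 key2 with h | h
    · exact h
    · exact absurd h hcard
  exact_mod_cast this

end FourierAux

lemma aux_sets {α : Type*} [DecidableEq α] (S S' T T' : Finset α)
    (hST : ∀ x, ¬(x ∈ S ∧ x ∈ T)) (hST' : ∀ x, ¬(x ∈ S' ∧ x ∈ T'))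
    (h : ∀ x, ((if x ∈ S' then (1:ℤ) else 0) - (if x ∈ T' then 1 else 0)
      - (if x ∈ S then 1 else 0) + (if x ∈ T then 1 else 0)) = 0) : S' = S := by
  ext x
  have hx := h x
  constructor
  · intro hxS'
    have hnT' : x ∉ T' := fun h' => hST' x ⟨hxS', h'⟩
    rw [if_pos hxS', if_neg hnT'] at hx
    by_contra hnS
    rw [if_neg hnS] at hx
    split_ifs at hx <;> omega
  · intro hxS
    have hnT : x ∉ T := fun h' => hST x ⟨hxS, h'⟩
    rw [if_pos hxS, if_neg hnT] at hx
    by_contra hnS'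
    rw [if_neg hnS'] at hx
    split_ifs at hx <;> omega

/-- The standard isomorphism `η : Gal(ℚ(ζ_m)/ℚ) ≅ (ℤ/mℤ)ˣ`, with `σ ζ_m = ζ_m ^ η σ`. -/
noncomputable def etaIso (m : ℕ+) :
    (CyclotomicField m ℚ ≃ₐ[ℚ] CyclotomicField m ℚ) ≃* (ZMod (m : ℕ))ˣ :=
  @IsCyclotomicExtension.autEquivPow _ _ _ _ _ _ _ _ (CyclotomicField.isCyclotomicExtension _ _) (Polynomial.cyclotomic.irreducible_rat m.pos)

lemma aux_galois_act (m : ℕ+) (σ : CyclotomicField m ℚ ≃ₐ[ℚ] CyclotomicField m ℚ)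
    (α : CyclotomicField m ℚ) (hα : α ^ (m : ℕ) = 1) :
    σ α = α ^ ((etaIso m σ : ZMod (m : ℕ)).val) := by
  haveI : NeZero ((m : ℕ)) := ⟨m.ne_zero⟩
  haveI : NeZero (((m : ℕ) : ℚ)) := ⟨Nat.cast_ne_zero.2 m.ne_zero⟩
  haveI : IsCyclotomicExtension {(m : ℕ)} ℚ (CyclotomicField m ℚ) := CyclotomicField.isCyclotomicExtension _ _
  have hζ := IsCyclotomicExtension.zeta_spec m ℚ (CyclotomicField m ℚ)
  obtain ⟨k, -, rfl⟩ := hζ.eq_pow_of_pow_eq_one hα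
  have hspec := hζ.autToPow_spec ℚ σ
  have heta : (etaIso m σ : ZMod (m : ℕ)) = (hζ.autToPow ℚ σ : ZMod (m : ℕ)) := rfl
  rw [heta, map_pow, ← hspec, ← pow_mul, ← pow_mul, mul_comm]

theorem mu_mem_iff_stabilizes (n : ℕ+) {G : Type*} [AddCommGroup G]
    [Fintype G] [DecidableEq G]
    (hexp : AddMonoid.exponent G = n)
    (χ : G → AddChar G (CyclotomicField (4 * n) ℚ))
    (hmul : ∀ g h x : G, χ (g + h) x = χ g x * χ h x)
    (hinj : Function.Injective χ)
    (ι : CyclotomicField (4 * n) ℚ) (hι : ι ^ 2 = -1)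
    (B : Finset G) (hB0 : (0 : G) ∉ B) (hB : B ∩ -B = ∅)
    (K : IntermediateField ℚ (CyclotomicField (4 * n) ℚ)) :
    (∀ g : G, (ι * ((∑ b ∈ B, χ g b) - ∑ b ∈ B, χ g (-b))) ∈ K) ↔
      ∀ σ ∈ K.fixingSubgroup,
        (((etaIso (4 * n)) σ : ZMod ((4 * n : ℕ+) : ℕ)).val % 4 = 1 →
          B.image (fun b =>
            (((etaIso (4 * n)) σ : ZMod ((4 * n : ℕ+) : ℕ)).val • b)) = B) ∧
        (((etaIso (4 * n)) σ : ZMod ((4 * n : ℕ+) : ℕ)).val % 4 = 3 →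
          B.image (fun b =>
            (((etaIso (4 * n)) σ : ZMod ((4 * n : ℕ+) : ℕ)).val • b)) = -B) := by
  classical
  have hm4 : ((4 * n : ℕ+) : ℕ) = 4 * (n : ℕ) := by simp
  haveI : NeZero (((4 * (n : ℕ) : ℕ) : ℚ)) := ⟨Nat.cast_ne_zero.2 (mul_ne_zero (by norm_num) n.ne_zero)⟩
  haveI : IsCyclotomicExtension {4 * (n : ℕ)} ℚ (CyclotomicField (4 * n) ℚ) := CyclotomicField.isCyclotomicExtension _ _
  haveI : IsGalois ℚ (CyclotomicField (4 * n) ℚ) := IsCyclotomicExtension.isGalois {4 * (n : ℕ)} ℚ (CyclotomicField (4 * n) ℚ)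
  haveI : FiniteDimensional ℚ (CyclotomicField (4 * n) ℚ) :=
    IsCyclotomicExtension.finiteDimensional {4 * (n : ℕ)} ℚ (CyclotomicField (4 * n) ℚ)
  -- membership criterion
  have hmemK : ∀ x : CyclotomicField (4 * n) ℚ, x ∈ K ↔ ∀ σ ∈ K.fixingSubgroup, σ x = x := by
    intro x
    constructor
    · intro hx σ hσ
      exact (K.mem_fixingSubgroup_iff σ).1 hσ x hx
    · intro hfix
      have hx : x ∈ IntermediateField.fixedField K.fixingSubgroup :=
        fun g => hfix g.1 g.2
      rwa [IsGalois.fixedField_fixingSubgroup K] at hx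
  -- exponent facts
  have hnsmul : ∀ x : G, (n : ℕ) • x = 0 := by
    intro x
    rw [← hexp]
    exact AddMonoid.exponent_nsmul_eq_zero x
  have hroot : ∀ g x, (χ g x) ^ ((4 * n : ℕ+) : ℕ) = 1 := by
    intro g x
    rw [hm4, pow_mul', ← AddChar.map_nsmul_eq_pow, hnsmul,
      AddChar.map_zero_eq_one, one_pow]
  -- iota facts
  have hι0 : ι ≠ 0 := by
    intro h
    rw [h] at hι
    have h0 : (0 : CyclotomicField (4 * n) ℚ) = -1 := by simpa using hι
    have h1 : (1 : CyclotomicField (4 * n) ℚ) = 0 := by linear_combination h0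
    exact one_ne_zero h1
  have hι4 : ι ^ 4 = 1 := by
    have : ι ^ 4 = (ι ^ 2) ^ 2 := by ring
    rw [this, hι]; ring
  have hιroot : ι ^ ((4 * n : ℕ+) : ℕ) = 1 := by
    rw [hm4, pow_mul, hι4, one_pow]
  have hι3 : ι ^ 3 = -ι := by
    have : ι ^ 3 = ι ^ 2 * ι := by ring
    rw [this, hι]; ring
  -- coprimality
  have hcop : ∀ σ : CyclotomicField (4 * n) ℚ ≃ₐ[ℚ] CyclotomicField (4 * n) ℚ,
      Nat.Coprime ((etaIso (4 * n) σ : ZMod ((4 * n : ℕ+) : ℕ)).val) ((4 * n : ℕ+) : ℕ) :=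
    fun σ => ZMod.val_coe_unit_coprime (etaIso (4 * n) σ)
  have hodd : ∀ σ : CyclotomicField (4 * n) ℚ ≃ₐ[ℚ] CyclotomicField (4 * n) ℚ,
      ((etaIso (4 * n) σ : ZMod ((4 * n : ℕ+) : ℕ)).val) % 4 = 1 ∨
      ((etaIso (4 * n) σ : ZMod ((4 * n : ℕ+) : ℕ)).val) % 4 = 3 := by
    intro σ
    have hg : Nat.gcd ((etaIso (4 * n) σ : ZMod ((4 * n : ℕ+) : ℕ)).val) ((4 * n : ℕ+) : ℕ) = 1 :=
      hcop σ
    have h2 : ¬ (2 ∣ ((etaIso (4 * n) σ : ZMod ((4 * n : ℕ+) : ℕ)).val)) := by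
      intro hd
      have h24 : (2 : ℕ) ∣ ((4 * n : ℕ+) : ℕ) := by
        rw [hm4]; exact ⟨2 * n, by ring⟩
      have := Nat.dvd_gcd hd h24
      rw [hg] at this
      omega
    omega
  -- scalar multiplication by coprime h
  have hzero : ∀ h : ℕ, Nat.Coprime h ((4 * n : ℕ+) : ℕ) → ∀ z : G, h • z = 0 → z = 0 := by
    intro h hcoph z hz0
    have h1 : addOrderOf z ∣ (n : ℕ) := hexp ▸ AddMonoid.addOrder_dvd_exponent z
    have h2 : addOrderOf z ∣ h := addOrderOf_dvd_of_nsmul_eq_zero hz0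
    have h4 : addOrderOf z ∣ Nat.gcd h ((4 * n : ℕ+) : ℕ) :=
      Nat.dvd_gcd h2 (h1.trans ⟨4, by rw [hm4]; ring⟩)
    rw [hcoph] at h4
    exact AddMonoid.addOrderOf_eq_one_iff.1 (Nat.eq_one_of_dvd_one h4)
  have hinj_smul : ∀ h : ℕ, Nat.Coprime h ((4 * n : ℕ+) : ℕ) →
      Function.Injective (fun x : G => h • x) := by
    intro h hcoph a b hab
    have : h • (a - b) = 0 := by
      simp only at hab
      rw [smul_sub, hab, sub_self]
    have := hzero h hcoph _ this
    rwa [sub_eq_zero] at this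
  -- sums over images
  have himg : ∀ (h : ℕ), Nat.Coprime h ((4 * n : ℕ+) : ℕ) → ∀ f : G → CyclotomicField (4 * n) ℚ,
      ∑ x ∈ B.image (fun b => h • b), f x = ∑ b ∈ B, f (h • b) := by
    intro h hc f
    exact Finset.sum_image (fun a _ b _ hab => hinj_smul h hc hab)
  -- sums over negation
  have hnegsum : ∀ (s : Finset G) (f : G → CyclotomicField (4 * n) ℚ), ∑ x ∈ -s, f x = ∑ x ∈ s, f (-x) := by
    intro s f
    rw [← Finset.image_neg_eq_neg]
    exact Finset.sum_image (fun a _ b _ h => neg_injective h)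
  -- indicator sums
  have hindsum : ∀ (s : Finset G) (g : G),
      ∑ x ∈ s, χ g x = ∑ x : G, (if x ∈ s then (1 : CyclotomicField (4 * n) ℚ) else 0) * χ g x := by
    intro s g
    simp only [ite_mul, one_mul, zero_mul]
    rw [Fintype.sum_ite_mem]
  -- the key Galois computation
  have hsigma : ∀ σ : CyclotomicField (4 * n) ℚ ≃ₐ[ℚ] CyclotomicField (4 * n) ℚ, ∀ g : G,
      σ (ι * ((∑ b ∈ B, χ g b) - ∑ b ∈ B, χ g (-b))) =
      ι ^ (((etaIso (4 * n) σ : ZMod ((4 * n : ℕ+) : ℕ)).val) % 4) *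
        ((∑ b ∈ B, χ g (((etaIso (4 * n) σ : ZMod ((4 * n : ℕ+) : ℕ)).val) • b)) -
          ∑ b ∈ B, χ g (-(((etaIso (4 * n) σ : ZMod ((4 * n : ℕ+) : ℕ)).val) • b))) := by
    intro σ g
    rw [map_mul, map_sub, map_sum, map_sum]
    have hισ : σ ι = ι ^ (((etaIso (4 * n) σ : ZMod ((4 * n : ℕ+) : ℕ)).val) % 4) := by
      refine (aux_galois_act (4 * n) σ ι hιroot).trans ((show ∀ k : ℕ, ι ^ k = ι ^ (k % 4) from fun k => by
        conv_lhs => rw [← Nat.div_add_mod k 4]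
        rw [pow_add, pow_mul, hι4, one_pow, one_mul]) _)
    have hχσ : ∀ x : G, σ (χ g x) =
        χ g ((((etaIso (4 * n) σ : ZMod ((4 * n : ℕ+) : ℕ)).val)) • x) := by
      intro x
      exact (aux_galois_act (4 * n) σ _ (hroot g x)).trans (AddChar.map_nsmul_eq_pow _ _ _).symm
    rw [hισ]
    congr 1
    congr 1
    · exact Finset.sum_congr rfl fun b _ => hχσ b
    · refine Finset.sum_congr rfl fun b _ => ?_
      rw [hχσ (-b), smul_neg]
  -- disjointness
  have hd1 : ∀ x : G, ¬(x ∈ B ∧ x ∈ -B) := by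
    intro x ⟨h1, h2⟩
    have : x ∈ B ∩ -B := Finset.mem_inter.2 ⟨h1, h2⟩
    rw [hB] at this
    exact Finset.notMem_empty x this
  have hd2 : ∀ h : ℕ, Nat.Coprime h ((4 * n : ℕ+) : ℕ) →
      ∀ x : G, ¬(x ∈ B.image (fun b => h • b) ∧ x ∈ -(B.image (fun b => h • b))) := by
    intro h hc x ⟨hx1, hx2⟩
    rw [Finset.mem_neg'] at hx2
    obtain ⟨b, hb, rfl⟩ := Finset.mem_image.1 hx1
    obtain ⟨b', hb', hbb⟩ := Finset.mem_image.1 hx2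
    have : h • (b' + b) = 0 := by
      rw [smul_add, hbb]
      simp
    have hb'b : b' = -b := by
      have := hzero h hc _ this
      linear_combination (norm := abel) this
    exact hd1 b ⟨hb, Finset.mem_neg'.2 (hb'b ▸ hb')⟩
  constructor
  · -- forward
    intro hmu σ hσ
    have hfix : ∀ g : G, σ (ι * ((∑ b ∈ B, χ g b) - ∑ b ∈ B, χ g (-b))) =
        ι * ((∑ b ∈ B, χ g b) - ∑ b ∈ B, χ g (-b)) :=
      fun g => (hmemK _).1 (hmu g) σ hσ
    set h : ℕ := ((etaIso (4 * n) σ : ZMod ((4 * n : ℕ+) : ℕ)).val) with hhdef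
    have hch : Nat.Coprime h ((4 * n : ℕ+) : ℕ) := hcop σ
    set Bh : Finset G := B.image (fun b => h • b) with hBh
    constructor
    · intro h1
      -- σ μ g = ι * (Sh - Th) = ι * (S - T)
      have heq : ∀ g : G, (∑ b ∈ B, χ g (h • b)) - (∑ b ∈ B, χ g (-(h • b))) =
          (∑ b ∈ B, χ g b) - ∑ b ∈ B, χ g (-b) := by
        intro g
        have := hfix g
        rw [hsigma σ g, h1, pow_one] at this
        exact mul_left_cancel₀ hι0 this
      set c : G → ℤ := fun x => (if x ∈ Bh then (1:ℤ) else 0) - (if x ∈ -Bh then 1 else 0)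
        - (if x ∈ B then 1 else 0) + (if x ∈ -B then 1 else 0) with hcdef
      have hcf : ∀ g : G, ∑ x : G, (c x : CyclotomicField (4 * n) ℚ) * χ g x = 0 := by
        intro g
        have e1 : ∑ x ∈ Bh, χ g x = ∑ b ∈ B, χ g (h • b) := himg h hch (χ g)
        have e2 : ∑ x ∈ -Bh, χ g x = ∑ b ∈ B, χ g (-(h • b)) := by
          rw [hnegsum Bh (χ g), himg h hch (fun x => χ g (-x))]
        have e3 : ∑ x ∈ -B, χ g x = ∑ b ∈ B, χ g (-b) := hnegsum B (χ g)
        calc ∑ x : G, (c x : CyclotomicField (4 * n) ℚ) * χ g x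
            = ∑ x : G, (((if x ∈ Bh then (1 : CyclotomicField (4 * n) ℚ) else 0) - (if x ∈ -Bh then 1 else 0)
              - (if x ∈ B then 1 else 0) + (if x ∈ -B then 1 else 0)) * χ g x) := by
              apply Finset.sum_congr rfl; intro x _
              congr 1
              simp only [hcdef]
              push_cast
              rfl
          _ = (∑ x ∈ Bh, χ g x) - (∑ x ∈ -Bh, χ g x)
              - (∑ x ∈ B, χ g x) + (∑ x ∈ -B, χ g x) := by
              simp only [sub_mul, add_mul, Finset.sum_sub_distrib, Finset.sum_add_distrib]
              rw [← hindsum Bh g, ← hindsum (-Bh) g, ← hindsum B g, ← hindsum (-B) g]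
          _ = 0 := by
              rw [e1, e2, e3]
              linear_combination heq g
      have hc0 := aux_fourier χ hmul hinj c hcf
      exact aux_sets B Bh (-B) (-Bh) hd1 (hd2 h hch) (fun x => hc0 x)
    · intro h3
      have heq : ∀ g : G, (∑ b ∈ B, χ g (-(h • b))) - (∑ b ∈ B, χ g (h • b)) =
          (∑ b ∈ B, χ g b) - ∑ b ∈ B, χ g (-b) := by
        intro g
        have := hfix g
        rw [hsigma σ g, h3, hι3] at this
        have h' : ι * ((∑ b ∈ B, χ g (-(h • b))) - ∑ b ∈ B, χ g (h • b)) =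
            ι * ((∑ b ∈ B, χ g b) - ∑ b ∈ B, χ g (-b)) := by
          linear_combination this
        exact mul_left_cancel₀ hι0 h'
      set c : G → ℤ := fun x => (if x ∈ -Bh then (1:ℤ) else 0) - (if x ∈ Bh then 1 else 0)
        - (if x ∈ B then 1 else 0) + (if x ∈ -B then 1 else 0) with hcdef
      have hcf : ∀ g : G, ∑ x : G, (c x : CyclotomicField (4 * n) ℚ) * χ g x = 0 := by
        intro g
        have e1 : ∑ x ∈ Bh, χ g x = ∑ b ∈ B, χ g (h • b) := himg h hch (χ g)
        have e2 : ∑ x ∈ -Bh, χ g x = ∑ b ∈ B, χ g (-(h • b)) := by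
          rw [hnegsum Bh (χ g), himg h hch (fun x => χ g (-x))]
        have e3 : ∑ x ∈ -B, χ g x = ∑ b ∈ B, χ g (-b) := hnegsum B (χ g)
        calc ∑ x : G, (c x : CyclotomicField (4 * n) ℚ) * χ g x
            = ∑ x : G, (((if x ∈ -Bh then (1 : CyclotomicField (4 * n) ℚ) else 0) - (if x ∈ Bh then 1 else 0)
              - (if x ∈ B then 1 else 0) + (if x ∈ -B then 1 else 0)) * χ g x) := by
              apply Finset.sum_congr rfl; intro x _
              congr 1
              simp only [hcdef]
              push_cast
              rfl
          _ = (∑ x ∈ -Bh, χ g x) - (∑ x ∈ Bh, χ g x)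
              - (∑ x ∈ B, χ g x) + (∑ x ∈ -B, χ g x) := by
              simp only [sub_mul, add_mul, Finset.sum_sub_distrib, Finset.sum_add_distrib]
              rw [← hindsum Bh g, ← hindsum (-Bh) g, ← hindsum B g, ← hindsum (-B) g]
          _ = 0 := by
              rw [e1, e2, e3]
              linear_combination heq g
      have hc0 := aux_fourier χ hmul hinj c hcf
      have hBhneg : -Bh = B :=
        aux_sets B (-Bh) (-B) Bh hd1
          (fun x ⟨hx1, hx2⟩ => hd2 h hch x ⟨hx2, hx1⟩) (fun x => hc0 x)
      rw [← hBhneg, neg_neg]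
  · -- backward
    intro hcond g
    rw [hmemK]
    intro σ hσ
    set h : ℕ := ((etaIso (4 * n) σ : ZMod ((4 * n : ℕ+) : ℕ)).val) with hhdef
    have hch : Nat.Coprime h ((4 * n : ℕ+) : ℕ) := hcop σ
    rcases hodd σ with h1 | h3
    · have hBh : B.image (fun b => h • b) = B := (hcond σ hσ).1 h1
      rw [hsigma σ g, h1, pow_one, ← himg h hch (χ g), ← himg h hch (fun x => χ g (-x)), hBh]
    · have hBh : B.image (fun b => h • b) = -B := (hcond σ hσ).2 h3
      rw [hsigma σ g, h3, hι3, ← himg h hch (χ g), ← himg h hch (fun x => χ g (-x)), hBh,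
        hnegsum B (χ g), hnegsum B (fun x => χ g (-x))]
      simp only [neg_neg]
      ring
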